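/- Inversion of the crossed-channel identity operator: for every Δ ∈ (0,1) and every real h̄ with h̄ > 1 − Δ, (2·sin²(πΔ)/π²) · (Γ(h̄)²/Γ(2h̄)) · ∫₀¹ x^{h̄+Δ−2} · (1−x)^{−Δ} · ₂F₁(h̄,h̄;2h̄;x) dx = 2·Γ(h̄+Δ−1) / (Γ(Δ)² · Γ(h̄−Δ+1)). -/

import Mathlib

open Real

/-- Pochhammer symbol `(a)_n = a (a+1) ⋯ (a+n-1)`. -/
noncomputable def poch (a : ℝ) (n : ℕ) : ℝ := (ascPochhammer ℝ n).eval a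

/-- Gauss hypergeometric series `₂F₁(a,b;c;x)`. -/
noncomputable def F21 (a b c x : ℝ) : ℝ :=
  ∑' n : ℕ, poch a n * poch b n / (poch c n * (n.factorial : ℝ)) * x ^ n

open MeasureTheory Filter Topology intervalIntegral Set

lemma poch_zero (a : ℝ) : poch a 0 = 1 := by simp [poch]
lemma poch_succ (a : ℝ) (n : ℕ) : poch a (n+1) = poch a n * (a + n) := by
  simp [poch, ascPochhammer_succ_eval]
lemma poch_pos {a : ℝ} (ha : 0 < a) (n : ℕ) : 0 < poch a n := by
  induction n with
  | zero => simp [poch_zero]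
  | succ n ih => rw [poch_succ]; positivity

lemma poch_le {a b : ℝ} (ha : 0 < a) (hab : a ≤ b) (n : ℕ) : poch a n ≤ poch b n := by
  induction n with
  | zero => simp [poch_zero]
  | succ n ih =>
    rw [poch_succ, poch_succ]
    have h1 := poch_pos ha n
    have h2 : (0:ℝ) < a + n := by positivity
    nlinarith
lemma Gamma_add_nat {a : ℝ} (ha : 0 < a) (n : ℕ) :
    Real.Gamma (a + n) = poch a n * Real.Gamma a := by
  induction n with
  | zero => simp [poch_zero]
  | succ n ih =>
    have h : a + (n+1:ℕ) = (a + n) + 1 := by push_cast; ring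
    rw [h, Real.Gamma_add_one (by positivity), ih, poch_succ]; ring

lemma complex_eq_real_beta {u v : ℝ} (x : ℝ) (hx : x ∈ Set.Icc (0:ℝ) 1) :
    ((x:ℂ) ^ ((u:ℂ) - 1) * (1 - (x:ℂ)) ^ ((v:ℂ) - 1))
      = ((x ^ (u-1) * (1-x) ^ (v-1) : ℝ) : ℂ) := by
  have h1 : ((u:ℂ) - 1) = ((u - 1 : ℝ) : ℂ) := by push_cast; ring
  have h2 : ((v:ℂ) - 1) = ((v - 1 : ℝ) : ℂ) := by push_cast; ring
  have h3 : (1 - (x:ℂ)) = ((1 - x : ℝ) : ℂ) := by push_cast; ring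
  rw [h1, h2, h3, ← Complex.ofReal_cpow hx.1, ← Complex.ofReal_cpow (by linarith [hx.2]),
    ← Complex.ofReal_mul]

lemma betaR_integrableOn {u v : ℝ} (hu : 0 < u) (hv : 0 < v) :
    IntegrableOn (fun x : ℝ => x ^ (u-1) * (1-x) ^ (v-1)) (Set.Ioc 0 1) volume := by
  have h := Complex.betaIntegral_convergent (u := u) (v := v) (by simpa) (by simpa)
  rw [intervalIntegrable_iff_integrableOn_Ioc_of_le (by norm_num)] at h
  refine (h.re).congr ?_
  apply Filter.eventuallyEq_of_mem (self_mem_ae_restrict measurableSet_Ioc)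
  intro x hx
  have := complex_eq_real_beta (u := u) (v := v) x ⟨le_of_lt hx.1, hx.2⟩
  simp [this]

lemma betaR_value {u v : ℝ} (hu : 0 < u) (hv : 0 < v) :
    ∫ x in (0:ℝ)..1, x ^ (u-1) * (1-x) ^ (v-1)
      = Real.Gamma u * Real.Gamma v / Real.Gamma (u+v) := by
  have key : Complex.betaIntegral u v = ((∫ x in (0:ℝ)..1, x ^ (u-1) * (1-x) ^ (v-1) : ℝ) : ℂ) := by
    rw [Complex.betaIntegral, ← intervalIntegral.integral_ofReal]
    refine intervalIntegral.integral_congr (fun x hx => ?_)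
    rw [Set.uIcc_of_le (by norm_num : (0:ℝ) ≤ 1)] at hx
    exact complex_eq_real_beta x hx
  have h := Complex.Gamma_mul_Gamma_eq_betaIntegral
    (s := (u:ℂ)) (t := (v:ℂ)) (by simpa) (by simpa)
  rw [key] at h
  have huv : ((u:ℂ) + v) = ((u + v : ℝ) : ℂ) := by push_cast; ring
  rw [huv, Complex.Gamma_ofReal, Complex.Gamma_ofReal, Complex.Gamma_ofReal,
    ← Complex.ofReal_mul, ← Complex.ofReal_mul] at h
  have h2 := Complex.ofReal_injective h
  have hG : Real.Gamma (u+v) ≠ 0 := (Real.Gamma_pos_of_pos (by linarith)).ne'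
  field_simp
  linarith [h2]

lemma betaR_Ioo {u v : ℝ} (hu : 0 < u) (hv : 0 < v) :
    ∫ x in Set.Ioo (0:ℝ) 1, x ^ (u-1) * (1-x) ^ (v-1)
      = Real.Gamma u * Real.Gamma v / Real.Gamma (u+v) := by
  rw [← MeasureTheory.integral_Ioc_eq_integral_Ioo, ← intervalIntegral.integral_of_le
    (by norm_num : (0:ℝ) ≤ 1)]
  exact betaR_value hu hv

lemma betaR_integrableOn_Ioo {u v : ℝ} (hu : 0 < u) (hv : 0 < v) :
    IntegrableOn (fun x : ℝ => x ^ (u-1) * (1-x) ^ (v-1)) (Set.Ioo 0 1) volume :=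
  (betaR_integrableOn hu hv).mono_set Set.Ioo_subset_Ioc_self

section binom
variable {a : ℝ}

/-- `(a+n)/(n+1) → 1`. -/
lemma ratio_tendsto (a : ℝ) : Tendsto (fun n : ℕ => (a + n) / (n + 1)) atTop (𝓝 1) := by
  have h : ∀ n : ℕ, (a + n) / (n + 1) = 1 + (a - 1) * (1 / (n + 1)) := by
    intro n
    have hn : ((n:ℝ) + 1) ≠ 0 := by positivity
    field_simp
    ring
  simp_rw [h]
  have h2 : Tendsto (fun n : ℕ => 1 + (a-1) * (1/(n+1:ℝ))) atTop (𝓝 (1 + (a-1)*0)) :=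
    tendsto_const_nhds.add (tendsto_const_nhds.mul tendsto_one_div_add_atTop_nhds_zero_nat)
  simpa using h2

/-- ratio test helper for positive sequences -/
lemma summable_of_pos_ratio {g : ℕ → ℝ} {l : ℝ} (hg : ∀ n, 0 < g n)
    (hr : Tendsto (fun n => g (n+1) / g n) atTop (𝓝 l)) (hl : l < 1) : Summable g := by
  refine summable_of_ratio_test_tendsto_lt_one hl
    (Filter.Eventually.of_forall fun n => (hg n).ne') ?_
  refine hr.congr fun n => ?_
  rw [Real.norm_eq_abs, Real.norm_eq_abs, abs_of_pos (hg (n+1)), abs_of_pos (hg n)]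

lemma summable_poch_pow (ha : 0 < a) {t : ℝ} (ht : |t| < 1) :
    Summable (fun n => poch a n / n.factorial * t ^ n) := by
  apply Summable.of_norm
  have hnorm : ∀ n : ℕ, ‖poch a n / n.factorial * t ^ n‖
      = poch a n / n.factorial * |t| ^ n := by
    intro n
    rw [Real.norm_eq_abs, abs_mul, abs_pow, abs_div,
      abs_of_pos (poch_pos ha n), Nat.abs_cast]
  simp_rw [hnorm]
  rcases eq_or_lt_of_le (abs_nonneg t) with h0 | h0
  · apply summable_of_ne_finset_zero (s := {0})
    intro n hn
    simp only [Finset.mem_singleton] at hn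
    rw [← h0, zero_pow hn, mul_zero]
  · apply summable_of_pos_ratio (l := |t|)
    · intro n
      have := poch_pos ha n
      have := Nat.factorial_pos n
      positivity
    · have heq : ∀ n : ℕ, (poch a (n+1) / (n+1).factorial * |t| ^ (n+1))
          / (poch a n / n.factorial * |t| ^ n) = (a + n) / (n + 1) * |t| := by
        intro n
        have h1 : poch a n ≠ 0 := (poch_pos ha n).ne'
        have h2 : ((n.factorial : ℝ)) ≠ 0 := Nat.cast_ne_zero.mpr (Nat.factorial_pos n).ne'
        have h3 : |t| ^ n ≠ 0 := pow_ne_zero n h0.ne'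
        rw [poch_succ, Nat.factorial_succ, pow_succ]
        push_cast
        field_simp
      simp_rw [heq]
      simpa using (ratio_tendsto a).mul_const |t|
    · exact ht

lemma summable_poch_deriv (ha : 0 < a) {t : ℝ} (ht : |t| < 1) :
    Summable (fun n : ℕ => poch a n / n.factorial * ((n : ℝ) * t ^ (n-1))) := by
  apply Summable.of_norm
  have hnorm : ∀ n : ℕ, ‖poch a n / n.factorial * ((n:ℝ) * t ^ (n-1))‖
      = poch a n / n.factorial * ((n:ℝ) * |t| ^ (n-1)) := by
    intro n
    rw [Real.norm_eq_abs, abs_mul, abs_mul, abs_pow, abs_div,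
      abs_of_pos (poch_pos ha n), Nat.abs_cast, Nat.abs_cast]
  simp_rw [hnorm]
  rw [← summable_nat_add_iff 1]
  simp only [Nat.add_sub_cancel]
  rcases eq_or_lt_of_le (abs_nonneg t) with h0 | h0
  · apply summable_of_ne_finset_zero (s := {0})
    intro n hn
    simp only [Finset.mem_singleton] at hn
    rw [← h0, zero_pow hn, mul_zero, mul_zero]
  · apply summable_of_pos_ratio (l := |t|)
    · intro n
      have := poch_pos ha (n+1)
      have := Nat.factorial_pos (n+1)
      positivity
    · have heq : ∀ n : ℕ, (poch a (n+2) / (n+2).factorial * (((n:ℝ)+2) * |t| ^ (n+1)))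
          / (poch a (n+1) / (n+1).factorial * (((n:ℝ)+1) * |t| ^ n))
          = ((a+1) + n) / (n + 1) * |t| := by
        intro n
        have h1 : poch a (n+1) ≠ 0 := (poch_pos ha (n+1)).ne'
        have h2 : (((n+1).factorial : ℝ)) ≠ 0 := Nat.cast_ne_zero.mpr (Nat.factorial_pos _).ne'
        have h3 : |t| ^ n ≠ 0 := pow_ne_zero n h0.ne'
        have h4 : poch a (n+2) = poch a (n+1) * (a + ((n:ℝ)+1)) := by
          have := poch_succ a (n+1); push_cast at this; convert this using 2 <;> ring
        have h5 : ((n+2).factorial : ℝ) = ((n:ℝ)+2) * ((n+1).factorial : ℝ) := by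
          rw [Nat.factorial_succ]; push_cast; ring
        rw [h4, h5, pow_succ]
        have hn2 : ((n:ℝ)+2) ≠ 0 := by positivity
        have hn1 : ((n:ℝ)+1) ≠ 0 := by positivity
        field_simp
        ring
      have : ∀ n : ℕ, (poch a (n+1+1) / (n+1+1).factorial * ((↑(n+1+1):ℝ) * |t| ^ (n+1)))
          / (poch a (n+1) / (n+1).factorial * ((↑(n+1):ℝ) * |t| ^ n))
          = ((a+1) + n) / (n + 1) * |t| := by
        intro n
        have := heq n
        push_cast at this ⊢
        convert this using 3 <;> ring
      simp_rw [this]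
      simpa using (ratio_tendsto (a+1)).mul_const |t|
    · exact ht
end binom

section binom2
variable {a : ℝ}

/-- the sum function -/
noncomputable def bsum (a t : ℝ) : ℝ := ∑' n : ℕ, poch a n / n.factorial * t ^ n
noncomputable def bder (a t : ℝ) : ℝ := ∑' n : ℕ, poch a n / n.factorial * ((n:ℝ) * t ^ (n-1))

lemma bsum_hasDerivAt (ha : 0 < a) {r : ℝ} (hr0 : 0 < r) (hr1 : r < 1)
    {y : ℝ} (hy : y ∈ Set.Ioo (-r) r) :
    HasDerivAt (bsum a) (bder a y) y := by
  have hrabs : |r| < 1 := by rwa [abs_of_pos hr0]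
  have main : HasDerivAt (fun z : ℝ => ∑' n : ℕ, poch a n / n.factorial * z ^ n)
      (∑' n : ℕ, poch a n / n.factorial * ((n:ℝ) * y ^ (n-1))) y := by
    refine hasDerivAt_tsum_of_isPreconnected (𝕜 := ℝ) (F := ℝ)
      (g := fun (n : ℕ) (z : ℝ) => poch a n / n.factorial * z ^ n)
      (g' := fun (n : ℕ) (z : ℝ) => poch a n / n.factorial * ((n:ℝ) * z ^ (n-1)))
      (u := fun n => poch a n / n.factorial * ((n:ℝ) * r ^ (n-1)))
      (summable_poch_deriv ha hrabs) isOpen_Ioo ((convex_Ioo _ _).isPreconnected)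
      (fun n z _ => ?_) (fun n z hz => ?_) (Set.mem_Ioo.mpr ⟨by linarith, hr0⟩) ?_ hy
    · exact (hasDerivAt_pow n z).const_mul (poch a n / n.factorial)
    · have hz' : |z| ≤ r := by
        rw [abs_le]; exact ⟨(Set.mem_Ioo.mp hz).1.le, (Set.mem_Ioo.mp hz).2.le⟩
      have h1 : 0 ≤ poch a n / n.factorial := by
        have := poch_pos ha n; have := Nat.factorial_pos n; positivity
      rw [Real.norm_eq_abs, abs_mul, abs_mul, abs_pow, abs_of_nonneg h1, Nat.abs_cast]
      exact mul_le_mul_of_nonneg_left (mul_le_mul_of_nonneg_left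
        (pow_le_pow_left₀ (abs_nonneg z) hz' _) (Nat.cast_nonneg n)) h1
    · exact summable_poch_pow ha (by rw [abs_zero]; norm_num)
  have hb : bsum a = fun z : ℝ => ∑' n : ℕ, poch a n / n.factorial * z ^ n := rfl
  rw [bder, hb]
  exact main

lemma bder_identity (ha : 0 < a) {t : ℝ} (ht : |t| < 1) :
    bder a t = a * bsum a t + t * bder a t := by
  have S1 := summable_poch_pow ha ht
  have S2 := summable_poch_deriv ha ht
  have h0 : bder a t = ∑' n : ℕ, poch a (n+1) / (n+1).factorial * ((↑(n+1):ℝ) * t ^ n) := by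
    rw [bder, Summable.tsum_eq_zero_add S2]
    simp
  have key : ∀ n : ℕ, poch a (n+1) / (n+1).factorial * ((↑(n+1):ℝ) * t ^ n)
      = a * (poch a n / n.factorial * t ^ n)
        + t * (poch a n / n.factorial * ((n:ℝ) * t ^ (n-1))) := by
    intro n
    have h2 : ((n.factorial : ℝ)) ≠ 0 := Nat.cast_ne_zero.mpr (Nat.factorial_pos n).ne'
    have hfs : ((n+1).factorial : ℝ) = ((n:ℝ)+1) * n.factorial := by
      rw [Nat.factorial_succ]; push_cast; ring
    have htp : t * ((n:ℝ) * t ^ (n-1)) = (n:ℝ) * t ^ n := by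
      cases n with
      | zero => simp
      | succ m => rw [Nat.add_sub_cancel]; ring
    have htp' : t * (poch a n / n.factorial * ((n:ℝ) * t ^ (n-1)))
        = poch a n / n.factorial * ((n:ℝ) * t ^ n) := by
      rw [mul_left_comm, htp]
    rw [poch_succ, hfs, htp']
    have hn1 : ((n:ℝ)+1) ≠ 0 := by positivity
    push_cast
    field_simp
  calc bder a t
      = ∑' n : ℕ, poch a (n+1) / (n+1).factorial * ((↑(n+1):ℝ) * t ^ n) := h0
    _ = ∑' n : ℕ, (a * (poch a n / n.factorial * t ^ n)
        + t * (poch a n / n.factorial * ((n:ℝ) * t ^ (n-1)))) := tsum_congr key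
    _ = (∑' n : ℕ, a * (poch a n / n.factorial * t ^ n))
        + ∑' n : ℕ, t * (poch a n / n.factorial * ((n:ℝ) * t ^ (n-1))) :=
        Summable.tsum_add (S1.mul_left a) (S2.mul_left t)
    _ = a * bsum a t + t * bder a t := by
        rw [tsum_mul_left, tsum_mul_left, bsum, bder]

lemma bsum_phi_deriv (ha : 0 < a) {r : ℝ} (hr0 : 0 < r) (hr1 : r < 1)
    {y : ℝ} (hy : y ∈ Set.Ioo (-r) r) :
    HasDerivAt (fun t => (1-t) ^ a * bsum a t) 0 y := by
  have h1y : 0 < 1 - y := by have := (Set.mem_Ioo.mp hy).2; linarith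
  have hyabs : |y| < 1 := by
    rw [abs_lt]
    constructor
    · have := (Set.mem_Ioo.mp hy).1; linarith
    · have := (Set.mem_Ioo.mp hy).2; linarith
  have hA : HasDerivAt (fun t : ℝ => (1-t) ^ a) (-1 * a * (1-y) ^ (a-1)) y := by
    have hid : HasDerivAt (fun t : ℝ => 1 - t) (-1) y := (hasDerivAt_id y).const_sub 1
    exact hid.rpow_const (Or.inl h1y.ne')
  have hB := bsum_hasDerivAt ha hr0 hr1 hy
  have h := hA.mul hB
  have hsplit : (1-y) ^ a = (1-y) ^ (a-1) * (1-y) := by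
    nth_rewrite 1 [show a = (a-1) + 1 by ring]
    rw [Real.rpow_add_one h1y.ne']
  have hident := bder_identity ha hyabs
  refine h.congr_deriv ?_
  rw [hsplit]
  linear_combination ((1-y) ^ (a-1)) * hident

theorem hasSum_binomial (ha : 0 < a) {t : ℝ} (ht0 : 0 ≤ t) (ht1 : t < 1) :
    HasSum (fun n => poch a n / n.factorial * t ^ n) ((1 - t) ^ (-a)) := by
  have htabs : |t| < 1 := by rwa [abs_of_nonneg ht0]
  have S1 := summable_poch_pow ha htabs
  suffices hval : bsum a t = (1 - t) ^ (-a) by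
    have := S1.hasSum
    rwa [show ∑' n, poch a n / n.factorial * t ^ n = bsum a t from rfl, hval] at this
  set r : ℝ := (1 + t) / 2 with hr
  have hr0 : 0 < r := by rw [hr]; linarith
  have hr1 : r < 1 := by rw [hr]; linarith
  have htr : t < r := by rw [hr]; linarith
  have hsub : Set.Icc (0:ℝ) t ⊆ Set.Ioo (-r) r := by
    intro x hx
    exact Set.mem_Ioo.mpr ⟨by nlinarith [hx.1], by nlinarith [hx.2]⟩
  have hconst := constant_of_has_deriv_right_zero
    (f := fun t => (1-t) ^ a * bsum a t) (a := 0) (b := t)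
    (fun x hx => ((bsum_phi_deriv ha hr0 hr1 (hsub hx)).continuousAt).continuousWithinAt)
    (fun x hx => ((bsum_phi_deriv ha hr0 hr1 (hsub (Set.Ico_subset_Icc_self hx))).hasDerivWithinAt))
  have hphit : (1-t) ^ a * bsum a t = (1-(0:ℝ)) ^ a * bsum a 0 :=
    hconst t (Set.mem_Icc.mpr ⟨ht0, le_refl t⟩)
  have hbsum0 : bsum a 0 = 1 := by
    rw [bsum, tsum_eq_single 0 (fun n hn => by simp [zero_pow hn])]
    simp [poch_zero]
  rw [sub_zero, Real.one_rpow, hbsum0, mul_one] at hphit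
  have h1t : 0 < 1 - t := by linarith
  rw [Real.rpow_neg h1t.le]
  rw [mul_comm] at hphit
  exact eq_inv_of_mul_eq_one_left hphit
end binom2

section main
open MeasureTheory Set ENNReal

lemma meas_term (C p q : ℝ) :
    Measurable (fun x : ℝ => ENNReal.ofReal (C * (x ^ p * (1-x) ^ q))) := by
  apply Measurable.ennreal_ofReal
  apply Measurable.const_mul
  apply Measurable.mul
  · measurability
  · have h1 : Measurable (fun x : ℝ => 1 - x) := measurable_const.sub measurable_id
    measurability

lemma lint_term {C p q : ℝ} (hC : 0 ≤ C) (hp : 0 < p) (hq : 0 < q) :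
    ∫⁻ x in Set.Ioo (0:ℝ) 1, ENNReal.ofReal (C * (x ^ (p-1) * (1-x) ^ (q-1)))
      = ENNReal.ofReal (C * (Real.Gamma p * Real.Gamma q / Real.Gamma (p+q))) := by
  have hnn : 0 ≤ᵐ[volume.restrict (Set.Ioo (0:ℝ) 1)]
      (fun x : ℝ => C * (x ^ (p-1) * (1-x) ^ (q-1))) := by
    filter_upwards [ae_restrict_mem measurableSet_Ioo] with x hx
    have hx0 : (0:ℝ) ≤ x := hx.1.le
    have hx1 : (0:ℝ) ≤ 1 - x := by linarith [hx.2]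
    exact mul_nonneg hC (mul_nonneg (Real.rpow_nonneg hx0 _) (Real.rpow_nonneg hx1 _))
  rw [← ofReal_integral_eq_lintegral_ofReal ((betaR_integrableOn_Ioo hp hq).const_mul C) hnn,
    MeasureTheory.integral_const_mul, betaR_Ioo hp hq]
end main

section gauss
open MeasureTheory Set ENNReal

lemma gauss_sum {Δ hb : ℝ} (hΔ0 : 0 < Δ) (hΔ1 : Δ < 1) (hhb : 1 - Δ < hb) :
    Summable (fun n : ℕ => poch hb n * poch (hb+Δ-1) n / (poch (2*hb) n * n.factorial)) ∧
    ∑' n : ℕ, poch hb n * poch (hb+Δ-1) n / (poch (2*hb) n * n.factorial)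
      = Real.Gamma (2*hb) * Real.Gamma (1-Δ) / (Real.Gamma hb * Real.Gamma (hb-Δ+1)) := by
  have hb0 : 0 < hb := by linarith
  have hb'0 : 0 < hb + Δ - 1 := by linarith
  have hq0 : 0 < hb - Δ + 1 := by linarith
  have hw0 : 0 < 1 - Δ := by linarith
  have h2hb : 0 < 2 * hb := by linarith
  set A : ℕ → ℝ := fun n => poch hb n * poch (hb+Δ-1) n / (poch (2*hb) n * n.factorial) with hA
  set BB : ℝ := Real.Gamma (hb+Δ-1) * Real.Gamma (hb-Δ+1) / Real.Gamma (2*hb) with hBB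
  have hBBpos : 0 < BB := by
    rw [hBB]
    have := Real.Gamma_pos_of_pos hb'0
    have := Real.Gamma_pos_of_pos hq0
    have := Real.Gamma_pos_of_pos h2hb
    positivity
  have hCnn : ∀ n : ℕ, 0 ≤ poch hb n / n.factorial := fun n => by
    have := poch_pos hb0 n; have := Nat.factorial_pos n; positivity
  have hAnn : ∀ n : ℕ, 0 ≤ A n * BB := fun n => by
    rw [hA]
    have := poch_pos hb0 n; have := poch_pos hb'0 n; have := poch_pos h2hb n
    have := Nat.factorial_pos n
    positivity
  -- per-n integral evaluation
  have hper : ∀ n : ℕ,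
      ∫⁻ t in Set.Ioo (0:ℝ) 1, ENNReal.ofReal ((poch hb n / n.factorial) *
        (t ^ ((hb+Δ-1+n) - 1) * (1-t) ^ ((hb-Δ+1) - 1)))
      = ENNReal.ofReal (A n * BB) := by
    intro n
    rw [lint_term (hCnn n) (by positivity) hq0]
    congr 1
    have h1 : (hb+Δ-1+(n:ℝ)) + (hb-Δ+1) = 2*hb + n := by ring
    rw [h1, Gamma_add_nat hb'0 n, Gamma_add_nat h2hb n, hA, hBB]
    have e1 : poch (2*hb) n ≠ 0 := (poch_pos h2hb n).ne'
    have e2 : ((n.factorial : ℝ)) ≠ 0 := Nat.cast_ne_zero.mpr (Nat.factorial_pos n).ne'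
    have e3 : Real.Gamma (2*hb) ≠ 0 := (Real.Gamma_pos_of_pos h2hb).ne'
    field_simp
  -- interchange
  have hswap : ∑' n : ℕ, ENNReal.ofReal (A n * BB)
      = ∫⁻ t in Set.Ioo (0:ℝ) 1, ∑' n : ℕ, ENNReal.ofReal ((poch hb n / n.factorial) *
          (t ^ ((hb+Δ-1+n) - 1) * (1-t) ^ ((hb-Δ+1) - 1))) := by
    rw [lintegral_tsum (fun n => (meas_term _ _ _).aemeasurable)]
    exact (tsum_congr hper).symm
  -- pointwise sum via binomial series
  have hpoint : ∀ t ∈ Set.Ioo (0:ℝ) 1,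
      ∑' n : ℕ, ENNReal.ofReal ((poch hb n / n.factorial) *
          (t ^ ((hb+Δ-1+n) - 1) * (1-t) ^ ((hb-Δ+1) - 1)))
      = ENNReal.ofReal ((1:ℝ) * (t ^ ((hb+Δ-1) - 1) * (1-t) ^ ((1-Δ) - 1))) := by
    intro t ht
    obtain ⟨ht0, ht1⟩ := ht
    have h1t : 0 < 1 - t := by linarith
    have hbin := hasSum_binomial hb0 ht0.le ht1
    have hmul := hbin.mul_left (t ^ (hb+Δ-1-1) * (1-t) ^ ((hb-Δ+1) - 1))
    have hterm : ∀ n : ℕ, (t ^ (hb+Δ-1-1) * (1-t) ^ ((hb-Δ+1) - 1)) *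
        (poch hb n / n.factorial * t ^ n)
        = (poch hb n / n.factorial) * (t ^ ((hb+Δ-1+n) - 1) * (1-t) ^ ((hb-Δ+1) - 1)) := by
      intro n
      rw [show hb+Δ-1+(n:ℝ)-1 = (hb+Δ-1-1) + (n:ℝ) by ring, Real.rpow_add ht0,
        Real.rpow_natCast]
      ring
    have hval : (t ^ (hb+Δ-1-1) * (1-t) ^ ((hb-Δ+1) - 1)) * (1-t) ^ (-hb)
        = (1:ℝ) * (t ^ ((hb+Δ-1) - 1) * (1-t) ^ ((1-Δ) - 1)) := by
      rw [show (1-Δ) - 1 = ((hb-Δ+1) - 1) + (-hb) by ring, Real.rpow_add h1t]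
      ring
    have hs : HasSum (fun n : ℕ => (poch hb n / n.factorial) *
        (t ^ ((hb+Δ-1+n) - 1) * (1-t) ^ ((hb-Δ+1) - 1)))
        ((1:ℝ) * (t ^ ((hb+Δ-1) - 1) * (1-t) ^ ((1-Δ) - 1))) := by
      rw [← hval]
      exact hmul.congr_fun fun n => (hterm n).symm
    have hnn : ∀ n : ℕ, 0 ≤ (poch hb n / n.factorial) *
        (t ^ ((hb+Δ-1+n) - 1) * (1-t) ^ ((hb-Δ+1) - 1)) := fun n => by
      have := hCnn n
      have := Real.rpow_nonneg ht0.le ((hb+Δ-1+(n:ℝ)) - 1)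
      have := Real.rpow_nonneg h1t.le ((hb-Δ+1) - 1)
      positivity
    rw [← ENNReal.ofReal_tsum_of_nonneg hnn hs.summable, hs.tsum_eq]
  -- final ENNReal identity
  have hEq : ∑' n : ℕ, ENNReal.ofReal (A n * BB)
      = ENNReal.ofReal ((1:ℝ) * (Real.Gamma (hb+Δ-1) * Real.Gamma (1-Δ) / Real.Gamma hb)) := by
    rw [hswap, setLIntegral_congr_fun measurableSet_Ioo hpoint,
      lint_term (by norm_num) hb'0 hw0, show (hb+Δ-1) + (1-Δ) = hb by ring]
  have hnntop : ∑' n : ℕ, ENNReal.ofReal (A n * BB) ≠ ⊤ := by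
    rw [hEq]; exact ENNReal.ofReal_ne_top
  have hsummb : Summable (fun n => A n * BB) := by
    have h := ENNReal.summable_toReal hnntop
    refine h.congr fun n => ?_
    exact ENNReal.toReal_ofReal (hAnn n)
  have htsum : ∑' n : ℕ, (A n * BB)
      = (1:ℝ) * (Real.Gamma (hb+Δ-1) * Real.Gamma (1-Δ) / Real.Gamma hb) := by
    have h2 := ENNReal.ofReal_tsum_of_nonneg hAnn hsummb
    rw [hEq] at h2
    have hnn1 : 0 ≤ ∑' n : ℕ, (A n * BB) := tsum_nonneg hAnn
    have hnn2 : 0 ≤ (1:ℝ) * (Real.Gamma (hb+Δ-1) * Real.Gamma (1-Δ) / Real.Gamma hb) := by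
      have := Real.Gamma_pos_of_pos hb'0
      have := Real.Gamma_pos_of_pos hw0
      have := Real.Gamma_pos_of_pos hb0
      positivity
    exact (ENNReal.ofReal_eq_ofReal_iff hnn1 hnn2).mp h2
  have hsumA : Summable A := by
    refine (hsummb.div_const BB).congr fun n => ?_
    exact mul_div_cancel_right₀ (A n) hBBpos.ne'
  refine ⟨hsumA, ?_⟩
  have hmr : (∑' n, A n) * BB
      = (1:ℝ) * (Real.Gamma (hb+Δ-1) * Real.Gamma (1-Δ) / Real.Gamma hb) := by
    rw [← tsum_mul_right]; exact htsum
  have e1 : Real.Gamma (hb+Δ-1) ≠ 0 := (Real.Gamma_pos_of_pos hb'0).ne'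
  have e2 : Real.Gamma (hb-Δ+1) ≠ 0 := (Real.Gamma_pos_of_pos hq0).ne'
  have e3 : Real.Gamma (2*hb) ≠ 0 := (Real.Gamma_pos_of_pos h2hb).ne'
  have e4 : Real.Gamma hb ≠ 0 := (Real.Gamma_pos_of_pos hb0).ne'
  rw [hBB] at hmr
  rw [_root_.eq_div_iff (by positivity)]
  field_simp at hmr
  apply mul_left_cancel₀ e1
  rw [show hb * 2 = 2 * hb by ring] at hmr
  linear_combination Real.Gamma (hb+Δ-1) * hmr
end gauss

section mainint
open MeasureTheory Set ENNReal

lemma main_integral {Δ hb : ℝ} (hΔ0 : 0 < Δ) (hΔ1 : Δ < 1) (hhb : 1 - Δ < hb) :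
    ∫ x in Set.Ioo (0:ℝ) 1, x ^ (hb + Δ - 2) * (1 - x) ^ (-Δ) * F21 hb hb (2 * hb) x
      = Real.Gamma (1-Δ)^2 * Real.Gamma (hb+Δ-1) * Real.Gamma (2*hb)
        / (Real.Gamma hb^2 * Real.Gamma (hb-Δ+1)) := by
  have hb0 : 0 < hb := by linarith
  have hb'0 : 0 < hb + Δ - 1 := by linarith
  have hq0 : 0 < hb - Δ + 1 := by linarith
  have hw0 : 0 < 1 - Δ := by linarith
  have h2hb : 0 < 2 * hb := by linarith
  obtain ⟨hsumA, htsumA⟩ := gauss_sum hΔ0 hΔ1 hhb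
  set c : ℕ → ℝ := fun n => poch hb n * poch hb n / (poch (2*hb) n * (n.factorial : ℝ)) with hc
  have hcnn : ∀ n, 0 ≤ c n := fun n => by
    rw [hc]
    have := poch_pos hb0 n; have := poch_pos h2hb n; have := Nat.factorial_pos n
    positivity
  have hcle : ∀ n, c n ≤ poch hb n / n.factorial := by
    intro n
    rw [hc, div_le_div_iff₀ (by have := poch_pos h2hb n; have := Nat.factorial_pos n; positivity)
      (by have := Nat.factorial_pos n; positivity)]
    have h1 := poch_le hb0 (by linarith : hb ≤ 2*hb) n
    have h2 := poch_pos hb0 n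
    have h3 : (0:ℝ) < n.factorial := by exact_mod_cast Nat.factorial_pos n
    calc poch hb n * poch hb n * ↑n.factorial
        = poch hb n * (poch hb n * ↑n.factorial) := by ring
      _ ≤ poch hb n * (poch (2*hb) n * ↑n.factorial) :=
        mul_le_mul_of_nonneg_left (mul_le_mul_of_nonneg_right h1 h3.le) h2.le
  set CC : ℝ := Real.Gamma (1-Δ) * Real.Gamma (hb+Δ-1) / Real.Gamma hb with hCC
  -- per-n lintegral
  have hper2 : ∀ n : ℕ,
      ∫⁻ x in Set.Ioo (0:ℝ) 1, ENNReal.ofReal (c n *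
        (x ^ ((hb+Δ-1+n) - 1) * (1-x) ^ ((1-Δ) - 1)))
      = ENNReal.ofReal ((poch hb n * poch (hb+Δ-1) n / (poch (2*hb) n * n.factorial)) * CC) := by
    intro n
    rw [lint_term (hcnn n) (by positivity) hw0]
    congr 1
    rw [show hb+Δ-1+(n:ℝ) + (1-Δ) = hb + n by ring, Gamma_add_nat hb'0 n, Gamma_add_nat hb0 n,
      hc, hCC]
    have e1 : poch (2*hb) n ≠ 0 := (poch_pos h2hb n).ne'
    have e2 : poch hb n ≠ 0 := (poch_pos hb0 n).ne'
    have e3 : ((n.factorial : ℝ)) ≠ 0 := Nat.cast_ne_zero.mpr (Nat.factorial_pos n).ne'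
    have e4 : Real.Gamma hb ≠ 0 := (Real.Gamma_pos_of_pos hb0).ne'
    field_simp
  -- pointwise identification
  have hpoint : ∀ x ∈ Set.Ioo (0:ℝ) 1,
      HasSum (fun n : ℕ => c n * (x ^ ((hb+Δ-1+n) - 1) * (1-x) ^ ((1-Δ) - 1)))
        (x ^ (hb + Δ - 2) * (1 - x) ^ (-Δ) * F21 hb hb (2 * hb) x) := by
    intro x hx
    obtain ⟨hx0, hx1⟩ := hx
    have h1x : 0 < 1 - x := by linarith
    have hsum_c : Summable (fun n => c n * x ^ n) := by
      refine Summable.of_nonneg_of_le (fun n => by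
        have := hcnn n; have := pow_nonneg hx0.le n; positivity) (fun n => ?_)
        ((hasSum_binomial hb0 hx0.le hx1).summable)
      exact mul_le_mul_of_nonneg_right (hcle n) (pow_nonneg hx0.le n)
    have hF : F21 hb hb (2*hb) x = ∑' n, c n * x ^ n := rfl
    have hmul := hsum_c.hasSum.mul_left (x ^ (hb+Δ-1-1) * (1-x) ^ ((1-Δ)-1))
    have hterm : ∀ n : ℕ, (x ^ (hb+Δ-1-1) * (1-x) ^ ((1-Δ)-1)) * (c n * x ^ n)
        = c n * (x ^ ((hb+Δ-1+n) - 1) * (1-x) ^ ((1-Δ) - 1)) := by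
      intro n
      rw [show hb+Δ-1+(n:ℝ)-1 = (hb+Δ-1-1) + (n:ℝ) by ring, Real.rpow_add hx0,
        Real.rpow_natCast]
      ring
    have hval : (x ^ (hb+Δ-1-1) * (1-x) ^ ((1-Δ)-1)) * (∑' n, c n * x ^ n)
        = x ^ (hb + Δ - 2) * (1 - x) ^ (-Δ) * F21 hb hb (2 * hb) x := by
      rw [hF, show hb+Δ-1-1 = hb+Δ-2 by ring, show (1-Δ)-1 = -Δ by ring]
    rw [← hval]
    exact hmul.congr_fun fun n => (hterm n).symm
  have htermnn : ∀ x ∈ Set.Ioo (0:ℝ) 1, ∀ n : ℕ,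
      0 ≤ c n * (x ^ ((hb+Δ-1+n) - 1) * (1-x) ^ ((1-Δ) - 1)) := by
    intro x hx n
    have := hcnn n
    have := Real.rpow_nonneg hx.1.le ((hb+Δ-1+(n:ℝ)) - 1)
    have := Real.rpow_nonneg (by linarith [hx.2] : (0:ℝ) ≤ 1 - x) ((1-Δ) - 1)
    positivity
  have hGmeas : Measurable (fun x : ℝ => ∑' n : ℕ, ENNReal.ofReal (c n *
      (x ^ ((hb+Δ-1+n) - 1) * (1-x) ^ ((1-Δ) - 1)))) :=
    Measurable.ennreal_tsum (fun n => meas_term (c n) ((hb+Δ-1+(n:ℝ)) - 1) ((1-Δ) - 1))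
  have hGx : ∀ x ∈ Set.Ioo (0:ℝ) 1, (∑' n : ℕ, ENNReal.ofReal (c n *
      (x ^ ((hb+Δ-1+n) - 1) * (1-x) ^ ((1-Δ) - 1))))
      = ENNReal.ofReal (x ^ (hb + Δ - 2) * (1 - x) ^ (-Δ) * F21 hb hb (2 * hb) x) := by
    intro x hx
    rw [← ENNReal.ofReal_tsum_of_nonneg (htermnn x hx) (hpoint x hx).summable,
      (hpoint x hx).tsum_eq]
  have hInt_nonneg : ∀ x ∈ Set.Ioo (0:ℝ) 1,
      0 ≤ x ^ (hb + Δ - 2) * (1 - x) ^ (-Δ) * F21 hb hb (2 * hb) x := by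
    intro x hx
    have h1 := Real.rpow_nonneg hx.1.le (hb + Δ - 2)
    have h2 := Real.rpow_nonneg (by linarith [hx.2] : (0:ℝ) ≤ 1 - x) (-Δ)
    have h3 : 0 ≤ F21 hb hb (2*hb) x := by
      have hFx : F21 hb hb (2*hb) x = ∑' n, c n * x ^ n := rfl
      rw [hFx]
      exact tsum_nonneg fun n => by
        have := hcnn n; have := pow_nonneg hx.1.le n; positivity
    positivity
  have hInn : 0 ≤ᵐ[volume.restrict (Set.Ioo (0:ℝ) 1)]
      (fun x => x ^ (hb + Δ - 2) * (1 - x) ^ (-Δ) * F21 hb hb (2 * hb) x) := by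
    filter_upwards [ae_restrict_mem measurableSet_Ioo] with x hx
    exact hInt_nonneg x hx
  have haesm : AEStronglyMeasurable
      (fun x => x ^ (hb + Δ - 2) * (1 - x) ^ (-Δ) * F21 hb hb (2 * hb) x)
      (volume.restrict (Set.Ioo (0:ℝ) 1)) := by
    refine (hGmeas.ennreal_toReal.aestronglyMeasurable).congr ?_
    filter_upwards [ae_restrict_mem measurableSet_Ioo] with x hx
    rw [hGx x hx, ENNReal.toReal_ofReal (hInt_nonneg x hx)]
  have hCCnn : 0 ≤ CC := by
    rw [hCC]
    have := Real.Gamma_pos_of_pos hw0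
    have := Real.Gamma_pos_of_pos hb'0
    have := Real.Gamma_pos_of_pos hb0
    positivity
  have hAnn : ∀ n : ℕ, 0 ≤ (poch hb n * poch (hb+Δ-1) n / (poch (2*hb) n * n.factorial)) * CC :=
    fun n => by
      have := poch_pos hb0 n; have := poch_pos hb'0 n; have := poch_pos h2hb n
      have := Nat.factorial_pos n
      positivity
  have hRHSnn : 0 ≤ Real.Gamma (1-Δ)^2 * Real.Gamma (hb+Δ-1) * Real.Gamma (2*hb)
      / (Real.Gamma hb^2 * Real.Gamma (hb-Δ+1)) := by
    have := Real.Gamma_pos_of_pos hw0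
    have := Real.Gamma_pos_of_pos hb'0
    have := Real.Gamma_pos_of_pos h2hb
    have := Real.Gamma_pos_of_pos hb0
    have := Real.Gamma_pos_of_pos hq0
    positivity
  rw [integral_eq_lintegral_of_nonneg_ae hInn haesm]
  have hlin : ∫⁻ x in Set.Ioo (0:ℝ) 1, ENNReal.ofReal
      (x ^ (hb + Δ - 2) * (1 - x) ^ (-Δ) * F21 hb hb (2 * hb) x)
      = ENNReal.ofReal (Real.Gamma (1-Δ)^2 * Real.Gamma (hb+Δ-1) * Real.Gamma (2*hb)
        / (Real.Gamma hb^2 * Real.Gamma (hb-Δ+1))) := by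
    rw [setLIntegral_congr_fun measurableSet_Ioo
      (fun x hx => (hGx x hx).symm),
      lintegral_tsum (fun n => (meas_term (c n) ((hb+Δ-1+(n:ℝ)) - 1) ((1-Δ) - 1)).aemeasurable),
      tsum_congr hper2,
      ← ENNReal.ofReal_tsum_of_nonneg hAnn (hsumA.mul_right CC), tsum_mul_right, htsumA]
    congr 1
    rw [hCC]
    have e1 : Real.Gamma hb ≠ 0 := (Real.Gamma_pos_of_pos hb0).ne'
    have e2 : Real.Gamma (hb-Δ+1) ≠ 0 := (Real.Gamma_pos_of_pos hq0).ne'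
    field_simp
  rw [hlin, ENNReal.toReal_ofReal hRHSnn]
end mainint


/-- inversion of the crossed-channel identity operator.
For Δ ∈ (0,1) and h̄ > 1 − Δ:
`(2 sin²(πΔ)/π²)·(Γ(h̄)²/Γ(2h̄))·∫₀¹ x^{h̄+Δ−2}(1−x)^{−Δ} ₂F₁(h̄,h̄;2h̄;x) dx
  = 2Γ(h̄+Δ−1)/(Γ(Δ)²Γ(h̄−Δ+1))`. -/
theorem inversion_identity_operator (Δ : ℝ) (hΔ : Δ ∈ Set.Ioo (0 : ℝ) 1)
    (hb : ℝ) (hhb : 1 - Δ < hb) :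
    2 * (Real.sin (π * Δ)) ^ 2 / π ^ 2 * ((Real.Gamma hb) ^ 2 / Real.Gamma (2 * hb)) *
        ∫ x in (0 : ℝ)..1, x ^ (hb + Δ - 2) * (1 - x) ^ (-Δ) * F21 hb hb (2 * hb) x
      = 2 * Real.Gamma (hb + Δ - 1) / ((Real.Gamma Δ) ^ 2 * Real.Gamma (hb - Δ + 1)) := by
  obtain ⟨hΔ0, hΔ1⟩ := hΔ
  rw [intervalIntegral.integral_of_le (by norm_num : (0:ℝ) ≤ 1),
    MeasureTheory.integral_Ioc_eq_integral_Ioo, main_integral hΔ0 hΔ1 hhb]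
  have hb0 : 0 < hb := by linarith
  have hspos : 0 < Real.sin (π * Δ) := by
    apply Real.sin_pos_of_pos_of_lt_pi
    · positivity
    · nlinarith [Real.pi_pos]
  have hrefl : Real.Gamma Δ * Real.Gamma (1-Δ) * Real.sin (π * Δ) = π := by
    have := Real.Gamma_mul_Gamma_one_sub Δ
    rw [this]
    field_simp
  have hπ2 : (π:ℝ)^2 = Real.Gamma Δ^2 * Real.Gamma (1-Δ)^2 * Real.sin (π * Δ)^2 := by
    linear_combination (-(π + Real.Gamma Δ * Real.Gamma (1-Δ) * Real.sin (π*Δ))) * hrefl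
  have e1 : Real.Gamma hb ≠ 0 := (Real.Gamma_pos_of_pos hb0).ne'
  have e2 : Real.Gamma (hb-Δ+1) ≠ 0 := (Real.Gamma_pos_of_pos (by linarith)).ne'
  have e3 : Real.Gamma (2*hb) ≠ 0 := (Real.Gamma_pos_of_pos (by linarith)).ne'
  have e4 : Real.Gamma Δ ≠ 0 := (Real.Gamma_pos_of_pos hΔ0).ne'
  have e5 : Real.Gamma (1-Δ) ≠ 0 := (Real.Gamma_pos_of_pos (by linarith)).ne'
  have e6 : Real.sin (π * Δ) ≠ 0 := hspos.ne'
  rw [hπ2]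
  field_simp
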